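/- arXiv:2305.18412 — 4 statements merged into one kernel-verified Lean document; each statement's English description precedes it below -/
import Mathlib

section
/- Let X and Y be bounded real random variables with means μ_x and μ_y, where |X - μ_x| ≤ r and |Y - μ_y| ≤ r almost surely, and suppose Y ≥ c > 0 almost surely with μ_y ≥ c. Then |E[X/Y] - (μ_x/μ_y + Var(Y)μ_x/μ_y³ - Cov(X,Y)/μ_y²)| ≤ C·r³ for an explicit constant C depending only on c and a bound on |μ_x|. -/
open MeasureTheory

theorem ratio_expectation_taylor_bound (c M : ℝ) (hc : 0 < c) (hM : 0 < M) :
    ∃ C : ℝ, 0 < C ∧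
      ∀ (Ω : Type) [MeasurableSpace Ω] (P : Measure Ω) [IsProbabilityMeasure P]
        (X Y : Ω → ℝ) (r μx μy : ℝ),
        Measurable X → Measurable Y → 0 ≤ r →
        μx = ∫ ω, X ω ∂P → μy = ∫ ω, Y ω ∂P →
        (∀ᵐ ω ∂P, |X ω - μx| ≤ r) → (∀ᵐ ω ∂P, |Y ω - μy| ≤ r) →
        (∀ᵐ ω ∂P, c ≤ Y ω) → c ≤ μy → |μx| ≤ M →
        |(∫ ω, X ω / Y ω ∂P) -
            (μx / μy + (∫ ω, (Y ω - μy) ^ 2 ∂P) * μx / μy ^ 3 -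
              (∫ ω, (X ω - μx) * (Y ω - μy) ∂P) / μy ^ 2)| ≤ C * r ^ 3 := by
  refine ⟨(c + M) / c ^ 4, by positivity, ?_⟩
  intro Ω _ P _ X Y r μx μy hX hY hr hμx hμy hXb hYb hYc hcy hMx
  have hμy0 : (0:ℝ) < μy := lt_of_lt_of_le hc hcy
  have hμyne : μy ≠ 0 := ne_of_gt hμy0
  -- integrability helper
  have integ : ∀ (f : Ω → ℝ) (K : ℝ), Measurable f → (∀ᵐ ω ∂P, |f ω| ≤ K) →
      Integrable f P := fun f K hf hbd =>
    (integrable_const K).mono' hf.aestronglyMeasurable (by simpa [Real.norm_eq_abs] using hbd)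
  have hIX : Integrable X P := by
    refine integ _ (M + r) hX ?_
    filter_upwards [hXb] with ω h
    have : |X ω| ≤ |X ω - μx| + |μx| := by
      calc |X ω| = |(X ω - μx) + μx| := by ring_nf
      _ ≤ |X ω - μx| + |μx| := abs_add_le _ _
    linarith
  have hIY : Integrable Y P := by
    refine integ _ (|μy| + r) hY ?_
    filter_upwards [hYb] with ω h
    calc |Y ω| = |(Y ω - μy) + μy| := by ring_nf
      _ ≤ |Y ω - μy| + |μy| := abs_add_le _ _
      _ ≤ |μy| + r := by linarith
  have hIa : Integrable (fun ω => X ω - μx) P :=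
    integ _ r (hX.sub measurable_const) hXb
  have hIb : Integrable (fun ω => Y ω - μy) P :=
    integ _ r (hY.sub measurable_const) hYb
  have hIab : Integrable (fun ω => (X ω - μx) * (Y ω - μy)) P := by
    refine integ _ (r * r) ((hX.sub measurable_const).mul (hY.sub measurable_const)) ?_
    filter_upwards [hXb, hYb] with ω h1 h2
    rw [abs_mul]
    exact mul_le_mul h1 h2 (abs_nonneg _) hr
  have hIb2 : Integrable (fun ω => (Y ω - μy) ^ 2) P := by
    refine integ _ (r ^ 2) ((hY.sub measurable_const).pow_const 2) ?_
    filter_upwards [hYb] with ω h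
    rw [abs_pow]
    exact pow_le_pow_left₀ (abs_nonneg _) h 2
  set R : Ω → ℝ := fun ω =>
    (Y ω - μy) ^ 2 * ((X ω - μx) * μy - μx * (Y ω - μy)) / (μy ^ 3 * Y ω) with hRdef
  have hRmeas : Measurable R := by
    apply Measurable.div
    · exact ((hY.sub measurable_const).pow_const 2).mul
        (((hX.sub measurable_const).mul_const μy).sub (measurable_const.mul (hY.sub measurable_const)))
    · exact measurable_const.mul hY
  have hRbound : ∀ᵐ ω ∂P, ‖R ω‖ ≤ (c + M) / c ^ 4 * r ^ 3 := by
    filter_upwards [hXb, hYb, hYc] with ω h1 h2 h3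
    have hY0 : (0:ℝ) < Y ω := lt_of_lt_of_le hc h3
    have hnum : |(X ω - μx) * μy - μx * (Y ω - μy)| ≤ r * μy + M * r := by
      calc |(X ω - μx) * μy - μx * (Y ω - μy)|
          ≤ |(X ω - μx) * μy| + |μx * (Y ω - μy)| := abs_sub _ _
        _ = |X ω - μx| * μy + |μx| * |Y ω - μy| := by
            rw [abs_mul, abs_mul, abs_of_pos hμy0]
        _ ≤ r * μy + M * r := by
            have := abs_nonneg (X ω - μx)
            have := abs_nonneg (Y ω - μy)
            have := abs_nonneg μx
            nlinarith
    have hb2 : (Y ω - μy) ^ 2 ≤ r ^ 2 := by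
      have := sq_abs (Y ω - μy)
      nlinarith [abs_nonneg (Y ω - μy)]
    have step1 : |R ω| ≤ r ^ 2 * (r * μy + M * r) / (μy ^ 3 * c) := by
      rw [hRdef]
      simp only
      rw [abs_div, abs_mul, abs_of_pos (by positivity : (0:ℝ) < μy ^ 3 * Y ω)]
      apply div_le_div₀ (by positivity)
      · rw [abs_pow, sq_abs] at *
        apply mul_le_mul hb2 hnum (abs_nonneg _) (by positivity)
      · positivity
      · exact mul_le_mul_of_nonneg_left h3 (by positivity)
    have step2 : r ^ 2 * (r * μy + M * r) / (μy ^ 3 * c) ≤ (c + M) / c ^ 4 * r ^ 3 := by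
      rw [div_mul_eq_mul_div, div_le_div_iff₀ (by positivity) (by positivity)]
      have key : c ^ 3 * (μy + M) ≤ (c + M) * μy ^ 3 := by
        have k2 : c ^ 2 ≤ μy ^ 2 := pow_le_pow_left₀ hc.le hcy 2
        have k3 : c ^ 3 ≤ μy ^ 3 := pow_le_pow_left₀ hc.le hcy 3
        nlinarith [mul_le_mul_of_nonneg_left k2 (mul_nonneg hc.le hμy0.le),
          mul_le_mul_of_nonneg_left k3 hM.le]
      have hr3 : (0:ℝ) ≤ r ^ 3 := by positivity
      nlinarith [mul_le_mul_of_nonneg_left key (mul_nonneg hr3 hc.le)]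
    rw [Real.norm_eq_abs]
    exact step1.trans step2
  have hIR : Integrable R P := integ _ _ hRmeas (by simpa [Real.norm_eq_abs] using hRbound)
  -- component integrabilities
  have hI2 : Integrable (fun ω => (X ω - μx) / μy) P := hIa.div_const _
  have hI3 : Integrable (fun ω => μx * (Y ω - μy) / μy ^ 2) P := (hIb.const_mul μx).div_const _
  have hI4 : Integrable (fun ω => (X ω - μx) * (Y ω - μy) / μy ^ 2) P := hIab.div_const _
  have hI5 : Integrable (fun ω => μx * (Y ω - μy) ^ 2 / μy ^ 3) P := (hIb2.const_mul μx).div_const _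
  have hI12 : Integrable (fun ω => μx / μy + (X ω - μx) / μy) P :=
    (integrable_const _).add hI2
  have hI123 : Integrable (fun ω => μx / μy + (X ω - μx) / μy
      - μx * (Y ω - μy) / μy ^ 2) P := hI12.sub hI3
  have hI1234 : Integrable (fun ω => μx / μy + (X ω - μx) / μy
      - μx * (Y ω - μy) / μy ^ 2 - (X ω - μx) * (Y ω - μy) / μy ^ 2) P := hI123.sub hI4
  have hI12345 : Integrable (fun ω => μx / μy + (X ω - μx) / μy
      - μx * (Y ω - μy) / μy ^ 2 - (X ω - μx) * (Y ω - μy) / μy ^ 2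
      + μx * (Y ω - μy) ^ 2 / μy ^ 3) P := hI1234.add hI5
  -- pointwise identity
  have hid : (fun ω => X ω / Y ω) =ᵐ[P] fun ω =>
      μx / μy + (X ω - μx) / μy - μx * (Y ω - μy) / μy ^ 2
        - (X ω - μx) * (Y ω - μy) / μy ^ 2 + μx * (Y ω - μy) ^ 2 / μy ^ 3 + R ω := by
    filter_upwards [hYc] with ω hω
    have hYne : Y ω ≠ 0 := ne_of_gt (lt_of_lt_of_le hc hω)
    rw [hRdef]
    field_simp
    ring
  have hEa : ∫ ω, (X ω - μx) ∂P = 0 := by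
    rw [integral_sub hIX (integrable_const _), integral_const]
    simp [← hμx]
  have hEb : ∫ ω, (Y ω - μy) ∂P = 0 := by
    rw [integral_sub hIY (integrable_const _), integral_const]
    simp [← hμy]
  have hsplit : ∫ ω, X ω / Y ω ∂P =
      μx / μy - (∫ ω, (X ω - μx) * (Y ω - μy) ∂P) / μy ^ 2
        + μx * (∫ ω, (Y ω - μy) ^ 2 ∂P) / μy ^ 3 + ∫ ω, R ω ∂P := by
    rw [integral_congr_ae hid]
    rw [integral_add hI12345 hIR, integral_add hI1234 hI5, integral_sub hI123 hI4,
        integral_sub hI12 hI3, integral_add (integrable_const (μx / μy)) hI2]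
    simp only [integral_div, integral_const_mul, integral_const, hEa, hEb, measure_univ,
      ENNReal.toReal_one, probReal_univ, smul_eq_mul, one_mul, mul_zero, zero_div, add_zero, sub_zero]
  rw [hsplit]
  have hrw : μx / μy - (∫ ω, (X ω - μx) * (Y ω - μy) ∂P) / μy ^ 2
        + μx * (∫ ω, (Y ω - μy) ^ 2 ∂P) / μy ^ 3 + (∫ ω, R ω ∂P)
        - (μx / μy + (∫ ω, (Y ω - μy) ^ 2 ∂P) * μx / μy ^ 3
            - (∫ ω, (X ω - μx) * (Y ω - μy) ∂P) / μy ^ 2) = ∫ ω, R ω ∂P := by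
    ring
  rw [hrw]
  have := norm_integral_le_of_norm_le_const (μ := P) hRbound
  simpa [Real.norm_eq_abs, measure_univ] using this
end

section
/- The derivative identity for B-splines: d/dx B_{i,p}(x) = p/(t_{i+p} - t_i) · B_{i,p-1}(x) - p/(t_{i+p+1} - t_{i+1}) · B_{i+1,p-1}(x), valid at all points where the pieces are differentiable. -/
/-- Cox–de Boor recursion for B-spline basis functions on a knot sequence `t : ℤ → ℝ`.
Terms with vanishing denominator are interpreted as zero. -/
noncomputable def Bspline (t : ℤ → ℝ) : ℕ → ℤ → ℝ → ℝ
  | 0, i, x => if t i ≤ x ∧ x < t (i + 1) then 1 else 0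
  | p + 1, i, x =>
      (if t (i + (p : ℤ) + 1) = t i then 0
        else (x - t i) / (t (i + (p : ℤ) + 1) - t i) * Bspline t p i x) +
      (if t (i + (p : ℤ) + 2) = t (i + 1) then 0
        else (t (i + (p : ℤ) + 2) - x) / (t (i + (p : ℤ) + 2) - t (i + 1)) *
          Bspline t p (i + 1) x)

theorem Bspline_succ_eq (t : ℤ → ℝ) (p : ℕ) (i : ℤ) (x : ℝ) :
    Bspline t (p+1) i x = (x - t i) / (t (i + (p:ℤ) + 1) - t i) * Bspline t p i x
      + (t (i + (p:ℤ) + 2) - x) / (t (i + (p:ℤ) + 2) - t (i+1)) * Bspline t p (i+1) x := by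
  rw [Bspline]
  congr 1 <;> split <;> simp_all

theorem Bspline_support (t : ℤ → ℝ) (ht : Monotone t) (p : ℕ) (i : ℤ) (x : ℝ)
    (h : Bspline t p i x ≠ 0) : t i ≤ x ∧ x < t (i + (p:ℤ) + 1) := by
  induction p generalizing i with
  | zero =>
    rw [Bspline] at h
    split at h
    · simpa using ‹_›
    · simp at h
  | succ p ih =>
    rw [Bspline_succ_eq] at h
    have h1 : Bspline t p i x ≠ 0 ∨ Bspline t p (i+1) x ≠ 0 := by
      by_contra hc
      push_neg at hc
      simp [hc.1, hc.2] at h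
    have harg : i + ((p:ℤ)+1) + 1 = (i+1) + (p:ℤ) + 1 := by ring
    rcases h1 with h1 | h1
    · obtain ⟨ha, hb⟩ := ih i h1
      refine ⟨ha, lt_of_lt_of_le hb (ht ?_)⟩
      push_cast; omega
    · obtain ⟨ha, hb⟩ := ih (i+1) h1
      refine ⟨le_trans (ht (by omega)) ha, ?_⟩
      push_cast
      rw [harg]; exact hb

theorem Bspline_zero_locally_const (t : ℤ → ℝ) (i : ℤ) (x : ℝ) (hx : ∀ j : ℤ, x ≠ t j) :
    (fun y => Bspline t 0 i y) =ᶠ[nhds x] fun _ => Bspline t 0 i x := by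
  by_cases h : t i ≤ x ∧ x < t (i + 1)
  · have h1 : t i < x := lt_of_le_of_ne h.1 (Ne.symm (hx i))
    filter_upwards [Ioo_mem_nhds h1 h.2] with y hy
    simp [Bspline, le_of_lt hy.1, hy.2, h]
  · rcases not_and_or.1 h with h1 | h1
    · push_neg at h1
      filter_upwards [Iio_mem_nhds h1] with y hy
      have : ¬ (t i ≤ y ∧ y < t (i+1)) := fun hc => absurd hc.1 (not_le.2 hy)
      simp [Bspline, this, h]
    · push_neg at h1
      have h2 : t (i+1) < x := lt_of_le_of_ne h1 (Ne.symm (hx (i+1)))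
      filter_upwards [Ioi_mem_nhds h2] with y hy
      have : ¬ (t i ≤ y ∧ y < t (i+1)) := fun hc => absurd hc.2 (not_lt.2 (le_of_lt hy))
      simp [Bspline, this, h]

theorem Bspline_deriv_key (t : ℤ → ℝ) (ht : Monotone t) (x : ℝ)
    (hx : ∀ j : ℤ, x ≠ t j) (p : ℕ) (i : ℤ) :
    HasDerivAt (fun y => Bspline t (p + 1) i y)
      (((p : ℝ) + 1) / (t (i + (p : ℤ) + 1) - t i) * Bspline t p i x -
       ((p : ℝ) + 1) / (t (i + (p : ℤ) + 2) - t (i + 1)) * Bspline t p (i + 1) x) x := by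
  induction p generalizing i with
  | zero =>
    have h1 : HasDerivAt (fun y => (y - t i) / (t (i + (0:ℤ) + 1) - t i) * Bspline t 0 i x)
        (1 / (t (i + (0:ℤ) + 1) - t i) * Bspline t 0 i x) x :=
      (((hasDerivAt_id x).sub_const _).div_const _).mul_const _
    have h2 : HasDerivAt (fun y => (t (i + (0:ℤ) + 2) - y) / (t (i + (0:ℤ) + 2) - t (i+1)) *
          Bspline t 0 (i+1) x)
        ((0 - 1) / (t (i + (0:ℤ) + 2) - t (i+1)) * Bspline t 0 (i+1) x) x := by
      exact (((hasDerivAt_const x _).sub (hasDerivAt_id x)).div_const _).mul_const _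
    have hev : (fun y => Bspline t (0 + 1) i y) =ᶠ[nhds x]
        (fun y => (y - t i) / (t (i + (0:ℤ) + 1) - t i) * Bspline t 0 i x +
          (t (i + (0:ℤ) + 2) - y) / (t (i + (0:ℤ) + 2) - t (i+1)) * Bspline t 0 (i+1) x) := by
      filter_upwards [Bspline_zero_locally_const t i x hx,
        Bspline_zero_locally_const t (i+1) x hx] with y hy1 hy2
      rw [Bspline_succ_eq, hy1, hy2]
      norm_num
    refine HasDerivAt.congr_of_eventuallyEq ?_ hev
    convert h1.add h2 using 1
    · rfl
    push_cast
    ring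
  | succ p ih =>
    have hfun : (fun y => Bspline t (p + 1 + 1) i y) =
        (fun y => (y - t i) / (t (i + ((p:ℤ)+1) + 1) - t i) * Bspline t (p+1) i y +
          (t (i + ((p:ℤ)+1) + 2) - y) / (t (i + ((p:ℤ)+1) + 2) - t (i+1)) *
            Bspline t (p+1) (i+1) y) := by
      funext y
      have := Bspline_succ_eq t (p+1) i y
      push_cast at this ⊢
      exact this
    rw [hfun]
    have h1 := ((((hasDerivAt_id x).sub_const (t i)).div_const
        (t (i + ((p:ℤ)+1) + 1) - t i)).mul (ih i))
    have h2 := ((((hasDerivAt_const x (t (i + ((p:ℤ)+1) + 2))).sub (hasDerivAt_id x)).div_const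
        (t (i + ((p:ℤ)+1) + 2) - t (i+1))).mul (ih (i+1)))
    refine (h1.add h2).congr_deriv ?_
    simp only [id_eq, Pi.sub_apply]
    -- normalize indices
    have e1 : i + ((p:ℤ)+1) + 1 = i + (p:ℤ) + 2 := by ring
    have e2 : i + ((p:ℤ)+1) + 2 = i + (p:ℤ) + 3 := by ring
    have e3 : i + 1 + (p:ℤ) + 1 = i + (p:ℤ) + 2 := by ring
    have e4 : i + 1 + (p:ℤ) + 2 = i + (p:ℤ) + 3 := by ring
    have e5 : i + 1 + 1 = i + 2 := by ring
    have hBi := Bspline_succ_eq t p i x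
    have hBi1 := Bspline_succ_eq t p (i+1) x
    rw [e3, e4, e5] at hBi1
    push_cast
    rw [e1, e2, e3, e4, e5, hBi, hBi1]
    by_cases hBm : Bspline t p (i+1) x = 0
    · rw [hBm]; push_cast; ring
    · have hsupp := Bspline_support t ht p (i+1) x hBm
      rw [e3] at hsupp
      have hv : t (i + (p:ℤ) + 2) - t i ≠ 0 := by
        have hle : t i ≤ t (i+1) := ht (by omega)
        intro h
        have := sub_eq_zero.1 h
        linarith [hsupp.1, hsupp.2]
      have hw : t (i + (p:ℤ) + 3) - t (i+1) ≠ 0 := by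
        have hle : t (i + (p:ℤ) + 2) ≤ t (i + (p:ℤ) + 3) := ht (by omega)
        intro h
        have := sub_eq_zero.1 h
        linarith [hsupp.1, hsupp.2]
      push_cast
      field_simp
      ring

/-- Derivative identity for B-splines of degree `p+1` at points that are not knots:
`d/dx B_{i,p+1}(x) = (p+1)/(t_{i+p+1}-t_i) B_{i,p}(x) - (p+1)/(t_{i+p+2}-t_{i+1}) B_{i+1,p}(x)`,
with terms having vanishing denominator interpreted as zero. -/
theorem Bspline_deriv (t : ℤ → ℝ) (ht : Monotone t) (p : ℕ) (i : ℤ) (x : ℝ)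
    (hx : ∀ j : ℤ, x ≠ t j) :
    HasDerivAt (fun y => Bspline t (p + 1) i y)
      ((if t (i + (p : ℤ) + 1) = t i then 0
          else ((p : ℝ) + 1) / (t (i + (p : ℤ) + 1) - t i) * Bspline t p i x) -
        (if t (i + (p : ℤ) + 2) = t (i + 1) then 0
          else ((p : ℝ) + 1) / (t (i + (p : ℤ) + 2) - t (i + 1)) * Bspline t p (i + 1) x))
      x := by
  have key := Bspline_deriv_key t ht x hx p i
  convert key using 2 <;> split <;> simp_all
end

section
/- Convolution of indicator with Gaussian against Gaussian: for the indicator h(u) = 1_{[0,σ_h]}(u) and Gaussian kernel φ_σ, ∫_ℝ (h ∗ φ_{σ_w})(s) · φ_{√2 σ_I}(s) ds = (1/2)·erf(σ_h/√(2σ_w² + 4σ_I²)). -/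
open Real MeasureTheory

/-- Centered Gaussian density with standard deviation `σ`. -/
noncomputable def gaussDens (σ : ℝ) (t : ℝ) : ℝ :=
  (1 / Real.sqrt (2 * Real.pi * σ ^ 2)) * Real.exp (-(t ^ 2) / (2 * σ ^ 2))

/-- The error function `erf(x) = (2/√π) ∫_0^x e^{-t²} dt`. -/
noncomputable def erf (x : ℝ) : ℝ :=
  (2 / Real.sqrt Real.pi) * ∫ t in (0 : ℝ)..x, Real.exp (-(t ^ 2))

lemma gaussDens_eq (σ : ℝ) :
    gaussDens σ = fun t => (1 / Real.sqrt (2 * Real.pi * σ ^ 2)) *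
      Real.exp (-(1 / (2 * σ ^ 2)) * t ^ 2) := by
  funext t
  simp only [gaussDens]
  congr 1
  ring_nf

lemma integrable_gaussDens {σ : ℝ} (hσ : 0 < σ) : Integrable (gaussDens σ) := by
  rw [gaussDens_eq]
  exact (integrable_exp_neg_mul_sq (by positivity)).const_mul _

lemma gaussDens_le {σ : ℝ} (t : ℝ) : gaussDens σ t ≤ 1 / Real.sqrt (2 * Real.pi * σ ^ 2) := by
  have h1 : Real.exp (-(t ^ 2) / (2 * σ ^ 2)) ≤ 1 := by
    rw [Real.exp_le_one_iff]
    have h0 : (0:ℝ) ≤ t ^ 2 / (2 * σ ^ 2) := by positivity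
    rw [neg_div]
    linarith
  have h0 : 0 ≤ 1 / Real.sqrt (2 * Real.pi * σ ^ 2) := by positivity
  calc gaussDens σ t ≤ 1 / Real.sqrt (2 * Real.pi * σ ^ 2) * 1 :=
        mul_le_mul_of_nonneg_left h1 h0
    _ = _ := by ring

lemma gaussDens_nonneg {σ : ℝ} (t : ℝ) : 0 ≤ gaussDens σ t := by
  unfold gaussDens; positivity

/-- Convolution identity for Gaussians. -/
lemma gaussConv {σ1 σ2 : ℝ} (h1 : 0 < σ1) (h2 : 0 < σ2) (u : ℝ) :
    ∫ s : ℝ, gaussDens σ1 (s - u) * gaussDens σ2 s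
      = gaussDens (Real.sqrt (σ1 ^ 2 + σ2 ^ 2)) u := by
  have hπ := Real.pi_pos
  set S := σ1 ^ 2 + σ2 ^ 2 with hS
  have hSpos : 0 < S := by positivity
  set A := S / (2 * σ1 ^ 2 * σ2 ^ 2) with hA
  have hApos : 0 < A := by positivity
  set B := u * σ2 ^ 2 / S with hB
  set C := (1 / Real.sqrt (2 * Real.pi * σ1 ^ 2)) * (1 / Real.sqrt (2 * Real.pi * σ2 ^ 2)) *
    Real.exp (-(u ^ 2) / (2 * S)) with hC
  have key : ∀ s : ℝ, gaussDens σ1 (s - u) * gaussDens σ2 s = C * Real.exp (-A * (s - B) ^ 2) := by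
    intro s
    have hexp : (-((s - u) ^ 2)) / (2 * σ1 ^ 2) + (-(s ^ 2)) / (2 * σ2 ^ 2)
        = (-(u ^ 2)) / (2 * S) + (-A * (s - B) ^ 2) := by
      rw [hA, hB, hS]
      field_simp
      ring
    simp only [gaussDens, hC]
    calc (1 / Real.sqrt (2 * Real.pi * σ1 ^ 2)) * Real.exp (-((s-u) ^ 2) / (2 * σ1 ^ 2)) *
          ((1 / Real.sqrt (2 * Real.pi * σ2 ^ 2)) * Real.exp (-(s ^ 2) / (2 * σ2 ^ 2)))
        = (1 / Real.sqrt (2 * Real.pi * σ1 ^ 2)) * (1 / Real.sqrt (2 * Real.pi * σ2 ^ 2)) *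
          Real.exp (-((s-u) ^ 2) / (2 * σ1 ^ 2) + -(s ^ 2) / (2 * σ2 ^ 2)) := by
          rw [Real.exp_add]; ring
      _ = _ := by rw [hexp, Real.exp_add]; ring
  calc ∫ s : ℝ, gaussDens σ1 (s - u) * gaussDens σ2 s
      = ∫ s : ℝ, C * Real.exp (-A * (s - B) ^ 2) := by simp only [key]
    _ = C * ∫ s : ℝ, Real.exp (-A * (s - B) ^ 2) := integral_const_mul _ _
    _ = C * ∫ s : ℝ, Real.exp (-A * s ^ 2) :=
        by rw [integral_sub_right_eq_self (fun s => Real.exp (-A * s ^ 2)) B]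
    _ = C * Real.sqrt (Real.pi / A) := by rw [integral_gaussian]
    _ = gaussDens (Real.sqrt S) u := by
        simp only [gaussDens, hC, Real.sq_sqrt hSpos.le]
        have hfrac : Real.pi / A = (2 * Real.pi * σ1 ^ 2) * (2 * Real.pi * σ2 ^ 2) / (2 * Real.pi * S) := by
          rw [hA]; field_simp
        have h1' : 0 < Real.sqrt (2 * Real.pi * σ1 ^ 2) := Real.sqrt_pos.2 (by positivity)
        have h2' : 0 < Real.sqrt (2 * Real.pi * σ2 ^ 2) := Real.sqrt_pos.2 (by positivity)
        have hS' : 0 < Real.sqrt (2 * Real.pi * S) := Real.sqrt_pos.2 (by positivity)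
        rw [hfrac, Real.sqrt_div (by positivity), Real.sqrt_mul (by positivity)]
        field_simp
        rw [← Real.sqrt_mul (show (0:ℝ) ≤ 2 * π by positivity) (σ1 ^ 2), ← Real.sqrt_mul (show (0:ℝ) ≤ 2 * π * σ1 ^ 2 by positivity)]
        congr 1
        ring

/-- Integral of a Gaussian over an interval. -/
lemma intervalIntegral_gaussDens {σ : ℝ} (hσ : 0 < σ) (a : ℝ) :
    ∫ u in (0:ℝ)..a, gaussDens σ u = (1 / 2) * erf (a / (Real.sqrt 2 * σ)) := by
  have hπ := Real.pi_pos
  set c := Real.sqrt 2 * σ with hc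
  have hcpos : 0 < c := by positivity
  have hc2 : c ^ 2 = 2 * σ ^ 2 := by
    rw [hc, mul_pow, Real.sq_sqrt (by norm_num : (0:ℝ) ≤ 2)]
  have key : ∀ u : ℝ, gaussDens σ u = (1 / Real.sqrt (2 * Real.pi * σ ^ 2)) *
      Real.exp (-((u / c) ^ 2)) := by
    intro u
    simp only [gaussDens]
    congr 1
    rw [div_pow, hc2]
    ring
  calc ∫ u in (0:ℝ)..a, gaussDens σ u
      = ∫ u in (0:ℝ)..a, (1 / Real.sqrt (2 * Real.pi * σ ^ 2)) * Real.exp (-((u / c) ^ 2)) := by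
        simp only [key]
    _ = (1 / Real.sqrt (2 * Real.pi * σ ^ 2)) * ∫ u in (0:ℝ)..a, Real.exp (-((u / c) ^ 2)) :=
        intervalIntegral.integral_const_mul _ _
    _ = (1 / Real.sqrt (2 * Real.pi * σ ^ 2)) * (c * ∫ u in (0:ℝ)/c..a/c, Real.exp (-(u ^ 2))) := by
        rw [intervalIntegral.integral_comp_div (fun x => Real.exp (-(x ^ 2))) hcpos.ne']
        simp [smul_eq_mul]
    _ = (1 / 2) * erf (a / c) := by
        rw [erf]
        have hsq : Real.sqrt (2 * Real.pi * σ ^ 2) = Real.sqrt Real.pi * c := by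
          rw [hc]
          rw [show 2 * Real.pi * σ ^ 2 = Real.pi * (Real.sqrt 2 * σ) ^ 2 by
            rw [mul_pow, Real.sq_sqrt (by norm_num : (0:ℝ) ≤ 2)]; ring]
          rw [Real.sqrt_mul Real.pi_pos.le, Real.sqrt_sq (by positivity)]
        rw [hsq]
        have hπ' : 0 < Real.sqrt Real.pi := Real.sqrt_pos.2 hπ
        rw [zero_div]
        field_simp

/-- Convolution of the indicator `1_{[0,σ_h]}` with the Gaussian `φ_{σ_w}`, integrated
against the Gaussian `φ_{√2 σ_I}`, equals `(1/2)·erf(σ_h / √(2σ_w² + 4σ_I²))`. -/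
theorem indicator_gauss_convolution_integral (σw σI σh : ℝ)
    (hw : 0 < σw) (hI : 0 < σI) (hh : 0 < σh) :
    (∫ s : ℝ,
        (∫ u : ℝ, (Set.Icc (0 : ℝ) σh).indicator (fun _ => (1 : ℝ)) u *
          gaussDens σw (s - u)) * gaussDens (Real.sqrt 2 * σI) s) =
      (1 / 2) * erf (σh / Real.sqrt (2 * σw ^ 2 + 4 * σI ^ 2)) := by
  have hπ := Real.pi_pos
  set σ' := Real.sqrt 2 * σI with hσ'
  have hσ'pos : 0 < σ' := by positivity
  set ind := (Set.Icc (0 : ℝ) σh).indicator (fun _ => (1 : ℝ)) with hind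
  have hind_nonneg : ∀ u, 0 ≤ ind u := fun u => Set.indicator_nonneg (fun _ _ => zero_le_one) u
  have hind_le : ∀ u, ind u ≤ 1 := by
    intro u
    rw [hind, Set.indicator_apply]
    split <;> norm_num
  have hmeas : AEStronglyMeasurable
      (Function.uncurry fun s u => ind u * gaussDens σw (s - u) * gaussDens σ' s)
      (volume.prod volume) := by
    apply Measurable.aestronglyMeasurable
    apply Measurable.mul
    apply Measurable.mul
    · exact (measurable_const.indicator measurableSet_Icc).comp measurable_snd
    · have : Continuous (gaussDens σw) := by
        rw [gaussDens_eq]; fun_prop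
      exact this.measurable.comp (measurable_fst.sub measurable_snd)
    · have : Continuous (gaussDens σ') := by
        rw [gaussDens_eq]; fun_prop
      exact this.measurable.comp measurable_fst
  have hInt : Integrable
      (Function.uncurry fun s u => ind u * gaussDens σw (s - u) * gaussDens σ' s)
      (volume.prod volume) := by
    set M := 1 / Real.sqrt (2 * Real.pi * σw ^ 2) with hM
    apply Integrable.mono'
      (g := fun p : ℝ × ℝ => (M * gaussDens σ' p.1) * ind p.2)
    · exact Integrable.mul_prod ((integrable_gaussDens hσ'pos).const_mul M)
        ((integrable_indicator_iff measurableSet_Icc).2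
          (integrableOn_const measure_Icc_lt_top.ne))
    · exact hmeas
    · filter_upwards with p
      simp only [Function.uncurry]
      rw [Real.norm_eq_abs, abs_of_nonneg (by
        have h1 := hind_nonneg p.2
        have h2 := gaussDens_nonneg (σ := σw) (p.1 - p.2)
        have h3 := gaussDens_nonneg (σ := σ') p.1
        positivity)]
      calc ind p.2 * gaussDens σw (p.1 - p.2) * gaussDens σ' p.1
          ≤ ind p.2 * M * gaussDens σ' p.1 :=
            mul_le_mul_of_nonneg_right
              (mul_le_mul_of_nonneg_left (gaussDens_le _) (hind_nonneg _))
              (gaussDens_nonneg _)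
        _ = (M * gaussDens σ' p.1) * ind p.2 := by ring
  have hSig : 0 < Real.sqrt (σw ^ 2 + σ' ^ 2) := Real.sqrt_pos.2 (by positivity)
  calc (∫ s : ℝ, (∫ u : ℝ, ind u * gaussDens σw (s - u)) * gaussDens σ' s)
      = ∫ s : ℝ, ∫ u : ℝ, ind u * gaussDens σw (s - u) * gaussDens σ' s := by
        simp_rw [← integral_mul_const]
    _ = ∫ u : ℝ, ∫ s : ℝ, ind u * gaussDens σw (s - u) * gaussDens σ' s :=
        integral_integral_swap hInt
    _ = ∫ u : ℝ, ind u * ∫ s : ℝ, gaussDens σw (s - u) * gaussDens σ' s := by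
        simp_rw [mul_assoc, integral_const_mul]
    _ = ∫ u : ℝ, ind u * gaussDens (Real.sqrt (σw ^ 2 + σ' ^ 2)) u := by
        simp_rw [gaussConv hw hσ'pos]
    _ = ∫ u : ℝ, (Set.Icc (0:ℝ) σh).indicator (gaussDens (Real.sqrt (σw ^ 2 + σ' ^ 2))) u := by
        congr 1
        funext u
        rw [hind, Set.indicator_apply, Set.indicator_apply]
        split <;> simp
    _ = ∫ u in Set.Icc (0:ℝ) σh, gaussDens (Real.sqrt (σw ^ 2 + σ' ^ 2)) u :=
        integral_indicator measurableSet_Icc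
    _ = ∫ u in (0:ℝ)..σh, gaussDens (Real.sqrt (σw ^ 2 + σ' ^ 2)) u := by
        rw [integral_Icc_eq_integral_Ioc, ← intervalIntegral.integral_of_le hh.le]
    _ = (1 / 2) * erf (σh / (Real.sqrt 2 * Real.sqrt (σw ^ 2 + σ' ^ 2))) :=
        intervalIntegral_gaussDens hSig σh
    _ = (1 / 2) * erf (σh / Real.sqrt (2 * σw ^ 2 + 4 * σI ^ 2)) := by
        congr 2
        rw [← Real.sqrt_mul (by norm_num : (0:ℝ) ≤ 2)]
        congr 1
        rw [hσ', mul_pow, Real.sq_sqrt (by norm_num : (0:ℝ) ≤ 2)]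
        ring
end

section
/- Autocorrelation of an indicator against a Gaussian: for h(u)=1_{[0,σ_h]}(u) and h⁻(u)=h(-u), ∫_ℝ (h ∗ h⁻)(s) · φ_{√2σ_I}(s) ds = σ_h·erf(σ_h/(2σ_I)) - (2σ_I/√π)(1 - exp(-σ_h²/(4σ_I²))). -/
open Real MeasureTheory

/-- The inner autocorrelation integral equals the triangular function `max (σh - |s|) 0`. -/
lemma autocorr_inner_eq (σh : ℝ) (s : ℝ) :
    (∫ u : ℝ, (Set.Icc (0 : ℝ) σh).indicator (fun _ => (1 : ℝ)) u *
      (Set.Icc (0 : ℝ) σh).indicator (fun _ => (1 : ℝ)) (u - s)) = max (σh - |s|) 0 := by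
  have key : ∀ u : ℝ, (Set.Icc (0:ℝ) σh).indicator (fun _ => (1:ℝ)) u *
      (Set.Icc (0:ℝ) σh).indicator (fun _ => (1:ℝ)) (u - s)
      = (Set.Icc (max 0 s) (min σh (σh + s))).indicator (fun _ => (1:ℝ)) u := by
    intro u
    have hr : (max 0 s ≤ u ∧ u ≤ min σh (σh + s)) ↔
        ((0 ≤ u ∧ u ≤ σh) ∧ (0 ≤ u - s ∧ u - s ≤ σh)) := by
      rw [max_le_iff, le_min_iff]
      constructor <;> rintro ⟨⟨a, b⟩, c, d⟩ <;>
        exact ⟨⟨by linarith, by linarith⟩, by linarith, by linarith⟩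
    simp only [Set.indicator_apply, Set.mem_Icc, hr]
    split_ifs <;> norm_num <;> tauto
  rw [integral_congr_ae (Filter.Eventually.of_forall key),
    MeasureTheory.integral_indicator_const (1:ℝ) measurableSet_Icc]
  rw [measureReal_def, Real.volume_Icc, smul_eq_mul, mul_one, ENNReal.toReal_ofReal']
  rcases le_total s 0 with h | h
  · rw [max_eq_left h, min_eq_right (by linarith), abs_of_nonpos h]
    ring_nf
  · rw [max_eq_right h, min_eq_left (by linarith), abs_of_nonneg h]

/-- By symmetry, the integral of the triangle against the Gaussian reduces to twice an
interval integral on `[0, σh]`. -/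
lemma triangle_gauss_reduce (σ : ℝ) (σh : ℝ) (hh : 0 < σh) :
    (∫ s : ℝ, max (σh - |s|) 0 * gaussDens σ s)
      = 2 * ∫ s in (0:ℝ)..σh, (σh - s) * gaussDens σ s := by
  have hφcont : Continuous (gaussDens σ) := by
    unfold gaussDens; fun_prop
  have hfint : ∀ a b : ℝ, IntervalIntegrable (fun s => (σh - |s|) * gaussDens σ s) volume a b :=
    fun a b => (Continuous.mul (by fun_prop) hφcont).intervalIntegrable a b
  have h1 : ∀ s : ℝ, max (σh - |s|) 0 * gaussDens σ s
      = (Set.Icc (-σh) σh).indicator (fun s => (σh - |s|) * gaussDens σ s) s := by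
    intro s
    by_cases hs : s ∈ Set.Icc (-σh) σh
    · rw [Set.indicator_of_mem hs]
      rw [Set.mem_Icc] at hs
      congr 1
      rw [max_eq_left (by rw [sub_nonneg, abs_le]; exact hs)]
    · rw [Set.indicator_of_notMem hs]
      rw [Set.mem_Icc, not_and_or, not_le, not_le] at hs
      rw [max_eq_right (by rcases hs with h | h <;> cases abs_cases s <;> linarith), zero_mul]
  rw [integral_congr_ae (Filter.Eventually.of_forall h1),
    MeasureTheory.integral_indicator measurableSet_Icc,
    MeasureTheory.integral_Icc_eq_integral_Ioc,
    ← intervalIntegral.integral_of_le (by linarith : -σh ≤ σh),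
    ← intervalIntegral.integral_add_adjacent_intervals (hfint (-σh) 0) (hfint 0 σh)]
  have φeven : ∀ s : ℝ, gaussDens σ (-s) = gaussDens σ s := by
    intro s; unfold gaussDens; ring_nf
  have neg : (∫ s in (-σh)..(0:ℝ), (σh - |s|) * gaussDens σ s)
      = ∫ s in (0:ℝ)..σh, (σh - |s|) * gaussDens σ s := by
    have h := intervalIntegral.integral_comp_neg (a := (0:ℝ)) (b := σh)
        (fun s => (σh - |s|) * gaussDens σ s)
    simp only [abs_neg, φeven, neg_zero] at h
    exact h.symm
  have pos : (∫ s in (0:ℝ)..σh, (σh - |s|) * gaussDens σ s)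
      = ∫ s in (0:ℝ)..σh, (σh - s) * gaussDens σ s := by
    apply intervalIntegral.integral_congr
    intro x hx
    rw [Set.uIcc_of_le hh.le, Set.mem_Icc] at hx
    simp only []
    rw [abs_of_nonneg hx.1]
  rw [neg, pos]; ring

/-- Explicit evaluation of the reduced interval integral. -/
lemma triangle_gauss_eval (σI σh : ℝ) (hI : 0 < σI) (hh : 0 < σh) :
    2 * (∫ s in (0:ℝ)..σh, (σh - s) * gaussDens (Real.sqrt 2 * σI) s)
      = σh * erf (σh / (2 * σI)) -
        (2 * σI / Real.sqrt Real.pi) * (1 - Real.exp (-(σh ^ 2) / (4 * σI ^ 2))) := by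
  set σ : ℝ := Real.sqrt 2 * σI with hσdef
  have hσ : 0 < σ := mul_pos (Real.sqrt_pos.mpr two_pos) hI
  have hσsq : σ ^ 2 = 2 * σI ^ 2 := by
    rw [hσdef, mul_pow, Real.sq_sqrt (by norm_num : (0:ℝ) ≤ 2)]
  set c : ℝ := 1 / Real.sqrt (2 * Real.pi * σ ^ 2) with hcdef
  have hsplit : (∫ s in (0:ℝ)..σh, (σh - s) * gaussDens σ s)
      = c * (σh * (∫ s in (0:ℝ)..σh, Real.exp (-(s^2) / (2*σ^2)))
          - ∫ s in (0:ℝ)..σh, s * Real.exp (-(s^2) / (2*σ^2))) := by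
    have e : ∀ s : ℝ, (σh - s) * gaussDens σ s
        = c * (σh * Real.exp (-(s^2) / (2*σ^2))) - c * (s * Real.exp (-(s^2) / (2*σ^2))) := by
      intro s; unfold gaussDens; rw [← hcdef]; ring
    simp only [e]
    rw [intervalIntegral.integral_sub ((Continuous.intervalIntegrable (by fun_prop) _ _))
        ((Continuous.intervalIntegrable (by fun_prop) _ _)),
      intervalIntegral.integral_const_mul, intervalIntegral.integral_const_mul,
      intervalIntegral.integral_const_mul]
    ring
  have hE1 : (∫ s in (0:ℝ)..σh, Real.exp (-(s^2) / (2*σ^2)))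
      = (2*σI) * ∫ t in (0:ℝ)..(σh / (2*σI)), Real.exp (-(t^2)) := by
    have harg : ∀ s : ℝ, Real.exp (-(s^2) / (2*σ^2))
        = (fun t => Real.exp (-(t^2))) (s / (2*σI)) := by
      intro s
      simp only
      rw [hσsq, div_pow]
      congr 1
      rw [mul_pow]
      ring
    simp only [harg]
    rw [intervalIntegral.integral_comp_div (fun t => Real.exp (-(t^2)))
      (by positivity : (2*σI) ≠ 0)]
    simp [smul_eq_mul]
  have hE2 : (∫ s in (0:ℝ)..σh, s * Real.exp (-(s^2) / (2*σ^2)))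
      = σ^2 * (1 - Real.exp (-(σh^2) / (2*σ^2))) := by
    have hderiv : ∀ s ∈ Set.uIcc (0:ℝ) σh,
        HasDerivAt (fun x : ℝ => -σ^2 * Real.exp (-(x^2) / (2*σ^2)))
          (s * Real.exp (-(s^2) / (2*σ^2))) s := by
      intro s _
      have h1 : HasDerivAt (fun x : ℝ => -(x^2) / (2*σ^2)) (-(2*s) / (2*σ^2)) s := by
        have := ((hasDerivAt_pow 2 s).neg).div_const (2*σ^2)
        simpa using this
      have h2 := (h1.exp).const_mul (-σ^2)
      convert h2 using 1
      · rfl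
      · rfl
      field_simp
    rw [intervalIntegral.integral_eq_sub_of_hasDerivAt hderiv
      (Continuous.intervalIntegrable (by fun_prop) _ _)]
    norm_num
    ring
  rw [hsplit, hE1, hE2]
  have hπ : (0:ℝ) < Real.sqrt Real.pi := Real.sqrt_pos.mpr Real.pi_pos
  have hc : c = 1 / (2 * σI * Real.sqrt Real.pi) := by
    rw [hcdef, hσsq, show 2 * Real.pi * (2 * σI^2) = (2*σI)^2 * Real.pi by ring,
      Real.sqrt_mul (by positivity), Real.sqrt_sq (by positivity)]
  have hexp : Real.exp (-(σh^2) / (2*σ^2)) = Real.exp (-(σh^2) / (4*σI^2)) := by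
    rw [hσsq]; ring_nf
  rw [hc, hexp, erf]
  rw [hσsq]
  field_simp

/-- The autocorrelation `(h ∗ h⁻)(s) = ∫ h(u) h(u - s) du` of `h = 1_{[0,σ_h]}`,
integrated against the Gaussian `φ_{√2 σ_I}`, equals
`σ_h·erf(σ_h/(2σ_I)) - (2σ_I/√π)(1 - exp(-σ_h²/(4σ_I²)))`. -/
theorem indicator_autocorrelation_gauss_integral (σI σh : ℝ) (hI : 0 < σI) (hh : 0 < σh) :
    (∫ s : ℝ,
        (∫ u : ℝ, (Set.Icc (0 : ℝ) σh).indicator (fun _ => (1 : ℝ)) u *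
          (Set.Icc (0 : ℝ) σh).indicator (fun _ => (1 : ℝ)) (u - s)) *
        gaussDens (Real.sqrt 2 * σI) s) =
      σh * erf (σh / (2 * σI)) -
        (2 * σI / Real.sqrt Real.pi) * (1 - Real.exp (-(σh ^ 2) / (4 * σI ^ 2))) := by
  have step1 : (∫ s : ℝ,
        (∫ u : ℝ, (Set.Icc (0 : ℝ) σh).indicator (fun _ => (1 : ℝ)) u *
          (Set.Icc (0 : ℝ) σh).indicator (fun _ => (1 : ℝ)) (u - s)) *
        gaussDens (Real.sqrt 2 * σI) s)
      = ∫ s : ℝ, max (σh - |s|) 0 * gaussDens (Real.sqrt 2 * σI) s := by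
    refine integral_congr_ae (Filter.Eventually.of_forall fun s => ?_)
    simp only []
    rw [autocorr_inner_eq]
  rw [step1, triangle_gauss_reduce _ _ hh, triangle_gauss_eval σI σh hI hh]
end
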